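/- Suppose B - C h_* > 0, -h_* ≤ h(r) ≤ 1 for all r ∈ ℝ, and δ := A - P B σ_s/(B - C h_*) > 0. Let (X, S) be a differentiable solution on [0, ∞) of the spatially homogeneous system with S(0) ∈ [B σ_s/(B + C), B σ_s/(B - C h_*)] and X(0) ≥ 1. Then there exists a time t* with 0 ≤ t* ≤ (X(0) - 1)/δ such that X(t*) ≤ 1. -/

import Mathlib

/-- for the spatially homogeneous system, if `B - C h_* > 0`,
`-h_* ≤ h ≤ 1`, `δ := A - P B σ_s/(B - C h_*) > 0`, `S(0)` lies in the strip
`[B σ_s/(B+C), B σ_s/(B - C h_*)]` and `X(0) ≥ 1`, then there is a time `t*` with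
`0 ≤ t* ≤ (X(0) - 1)/δ` and `X(t*) ≤ 1`. -/
theorem stmt_19 (A B C P σs hstar φstar : ℝ)
    (hA : 0 < A) (hB : 0 < B) (hC : 0 < C) (hP : 0 < P) (hσ : 0 < σs)
    (hstar_nn : 0 ≤ hstar) (hφ : φstar ≤ -1)
    (h : ℝ → ℝ) (hcont : Continuous h) (hmono : Monotone h)
    (hm1 : h (-1) = 0) (hone : ∀ r : ℝ, 1 ≤ r → h r = 1)
    (hlow : ∀ r : ℝ, r ≤ φstar → h r = -hstar)
    (hBC : 0 < B - C * hstar)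
    (hbound : ∀ r : ℝ, -hstar ≤ h r ∧ h r ≤ 1)
    (hδ : 0 < A - P * B * σs / (B - C * hstar))
    (X S : ℝ → ℝ)
    (hXd : ∀ t : ℝ, 0 ≤ t → HasDerivAt X ((P * S t - A) * h (X t)) t)
    (hSd : ∀ t : ℝ, 0 ≤ t → HasDerivAt S (-C * S t * h (X t) - B * (S t - σs)) t)
    (hS0 : S 0 ∈ Set.Icc (B * σs / (B + C)) (B * σs / (B - C * hstar)))
    (hX0 : 1 ≤ X 0) :
    ∃ tstar : ℝ, 0 ≤ tstar ∧
      tstar ≤ (X 0 - 1) / (A - P * B * σs / (B - C * hstar)) ∧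
      X tstar ≤ 1 := by
  set M : ℝ := B * σs / (B - C * hstar) with hM
  set δ : ℝ := A - P * B * σs / (B - C * hstar) with hδdef
  have hMpos : 0 < M := div_pos (mul_pos hB hσ) hBC
  have hMid : B * (M - σs) = C * hstar * M := by
    have h1 : M * (B - C * hstar) = B * σs := by
      rw [hM]; exact div_mul_cancel₀ _ hBC.ne'
    linear_combination h1
  -- Step 1: S t ≤ M for all t ≥ 0
  have hSle : ∀ t : ℝ, 0 ≤ t → S t ≤ M := by
    intro t ht
    have key : ∀ ε : ℝ, 0 < ε → S t ≤ M + ε * Real.exp t := by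
      intro ε hε
      have hScont : ContinuousOn S (Set.Icc 0 t) := fun x hx =>
        ((hSd x hx.1).continuousAt).continuousWithinAt
      have := image_le_of_deriv_right_lt_deriv_boundary
        (f := S) (f' := fun x => -C * S x * h (X x) - B * (S x - σs))
        (a := 0) (b := t)
        hScont
        (fun x hx => ((hSd x hx.1).hasDerivWithinAt))
        (B := fun x => M + ε * Real.exp x) (B' := fun x => ε * Real.exp x)
        (by
          simpa using le_trans hS0.2 (by nlinarith [Real.exp_pos (0:ℝ), Real.exp_zero]))
        (fun x => by
          simpa using ((Real.hasDerivAt_exp x).const_mul ε).const_add M)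
        ?_
      · exact this ⟨ht, le_refl t⟩
      · intro x hx hfx
        have hSx : S x = M + ε * Real.exp x := hfx
        have hu : 0 < ε * Real.exp x := mul_pos hε (Real.exp_pos x)
        have hSpos : 0 < S x := by rw [hSx]; linarith
        have hh := (hbound (X x)).1
        have h1 : -C * S x * h (X x) ≤ C * hstar * S x := by
          nlinarith [mul_nonneg (mul_pos hC hSpos).le (by linarith : (0:ℝ) ≤ h (X x) + hstar)]
        have : -C * S x * h (X x) - B * (S x - σs)
            ≤ (C * hstar - B) * (ε * Real.exp x) := by
          rw [hSx]
          nlinarith [hMid]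
        have hneg : (C * hstar - B) * (ε * Real.exp x) < 0 :=
          mul_neg_of_neg_of_pos (by linarith) hu
        calc -C * S x * h (X x) - B * (S x - σs)
            ≤ (C * hstar - B) * (ε * Real.exp x) := this
          _ < 0 := hneg
          _ < ε * Real.exp x := hu
    -- take ε → 0
    refine le_of_forall_pos_le_add fun ε' hε' => ?_
    have hexp : 0 < Real.exp t := Real.exp_pos t
    have := key (ε' / Real.exp t) (div_pos hε' hexp)
    calc S t ≤ M + ε' / Real.exp t * Real.exp t := this
      _ = M + ε' := by field_simp
  -- Step 2: main argument by contradiction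
  set T : ℝ := (X 0 - 1) / δ with hT
  have hTnn : 0 ≤ T := div_nonneg (by linarith) hδ.le
  by_contra hcon
  push_neg at hcon
  have hXgt : ∀ s : ℝ, s ∈ Set.Icc (0:ℝ) T → 1 < X s := by
    intro s hs
    by_contra hle
    push_neg at hle
    exact absurd hle (not_le.mpr (hcon s hs.1 (by rw [hT]; exact hs.2)))
  -- On [0,T], X' ≤ -δ
  have hXcont : ContinuousOn X (Set.Icc 0 T) := fun x hx =>
    ((hXd x hx.1).continuousAt).continuousWithinAt
  have hbnd : ∀ x ∈ Set.Ico (0:ℝ) T, (P * S x - A) * h (X x) ≤ -δ := by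
    intro x hx
    have hx1 : (1:ℝ) ≤ X x := (hXgt x ⟨hx.1, hx.2.le⟩).le
    have hhx : h (X x) = 1 := hone _ hx1
    have hSx := hSle x hx.1
    rw [hhx]
    have hPS : P * S x ≤ P * M := by nlinarith
    have : P * M - A = -δ := by rw [hδdef, hM]; ring
    linarith
  have hfence := image_le_of_deriv_right_le_deriv_boundary
    (f := X) (f' := fun x => (P * S x - A) * h (X x))
    (a := 0) (b := T)
    hXcont
    (fun x hx => ((hXd x hx.1).hasDerivWithinAt))
    (B := fun x => X 0 - δ * x) (B' := fun x => -δ)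
    (by simp)
    (Continuous.continuousOn (by continuity))
    (fun x hx => (((hasDerivAt_id x).const_mul δ).const_sub (X 0)).hasDerivWithinAt.congr_deriv
      (by ring))
    hbnd
  have hXT := hfence ⟨hTnn, le_refl T⟩
  have hδT : δ * T = X 0 - 1 := by
    rw [hT]; field_simp
  have := hXgt T ⟨hTnn, le_refl T⟩
  linarith
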